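/- Suppose Slater's condition holds: there exists ξ̂ ∈ Ξ with g(ξ̂, θ) < 0 for every θ ∈ Θ. Suppose in addition that ψ is strictly convex and coercive (ψ(ξ) → +∞ as ‖ξ‖ → +∞). If (θ₁*, …, θ_ν*) ∈ Θ^ν attains the supremum over Θ^ν of the relaxed value map (θ₁, …, θ_ν) ↦ inf { ψ(ξ) : ξ ∈ Ξ, g(ξ, θ_k) ≤ 0 for all k = 1, …, ν }, and ξ* minimizes ψ over { ξ ∈ Ξ : g(ξ, θ_k*) ≤ 0 for all k = 1, …, ν }, then ξ* is feasible for the full semi-infinite program (g(ξ*, θ) ≤ 0 for every θ ∈ Θ) and ξ* minimizes ψ over the feasible set { ξ ∈ Ξ : g(ξ, θ) ≤ 0 for all θ ∈ Θ }. -/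

import Mathlib

open Finset

-- Jensen-type bound for a convex combination written as `∑ a i • y i + (1 - ∑ a) • x`.
lemma combo_le {F : Type*} [NormedAddCommGroup F] [NormedSpace ℝ F]
    {ι : Type*} [Fintype ι] {f : F → ℝ}
    (hf : ConvexOn ℝ Set.univ f) {a : ι → ℝ} (ha : ∀ i, 0 ≤ a i)
    (hα0 : 0 < ∑ i, a i) (hα1 : ∑ i, a i ≤ 1)
    (y : ι → F) (x : F) :
    f (∑ i, a i • y i + (1 - ∑ i, a i) • x)
      ≤ ∑ i, a i * f (y i) + (1 - ∑ i, a i) * f x := by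
  set α := ∑ i, a i with hαdef
  have hu : f (∑ i, (a i / α) • y i) ≤ ∑ i, (a i / α) * f (y i) := by
    refine hf.map_sum_le (fun i _ => div_nonneg (ha i) hα0.le) ?_ (fun i _ => trivial)
    rw [← Finset.sum_div, ← hαdef, div_self hα0.ne']
  have hrw : α • (∑ i, (a i / α) • y i) = ∑ i, a i • y i := by
    rw [Finset.smul_sum]
    refine Finset.sum_congr rfl fun i _ => ?_
    rw [smul_smul, mul_div_cancel₀ _ hα0.ne']
  have h2 : f (α • (∑ i, (a i / α) • y i) + (1 - α) • x)
      ≤ α * f (∑ i, (a i / α) • y i) + (1 - α) * f x :=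
    hf.2 (Set.mem_univ _) (Set.mem_univ x) hα0.le (by linarith) (by ring)
  rw [hrw] at h2
  refine h2.trans ?_
  have : α * f (∑ i, (a i / α) • y i) ≤ α * (∑ i, (a i / α) * f (y i)) :=
    mul_le_mul_of_nonneg_left hu hα0.le
  have h3 : α * (∑ i, (a i / α) * f (y i)) = ∑ i, a i * f (y i) := by
    rw [Finset.mul_sum]
    refine Finset.sum_congr rfl fun i _ => ?_
    field_simp
  linarith [this, h3 ▸ this]

lemma combo_mem {F : Type*} [NormedAddCommGroup F] [NormedSpace ℝ F]
    {ι : Type*} [Fintype ι] {s : Set F} (hs : Convex ℝ s) {a : ι → ℝ} (ha : ∀ i, 0 ≤ a i)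
    (hα0 : 0 < ∑ i, a i) (hα1 : ∑ i, a i ≤ 1)
    {y : ι → F} {x : F} (hy : ∀ i, y i ∈ s) (hx : x ∈ s) :
    ∑ i, a i • y i + (1 - ∑ i, a i) • x ∈ s := by
  set α := ∑ i, a i with hαdef
  have hu : ∑ i, (a i / α) • y i ∈ s := by
    refine hs.sum_mem (fun i _ => div_nonneg (ha i) hα0.le) ?_ (fun i _ => hy i)
    rw [← Finset.sum_div, ← hαdef, div_self hα0.ne']
  have hrw : α • (∑ i, (a i / α) • y i) = ∑ i, a i • y i := by
    rw [Finset.smul_sum]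
    refine Finset.sum_congr rfl fun i _ => ?_
    rw [smul_smul, mul_div_cancel₀ _ hα0.ne']
  have h2 : α • (∑ i, (a i / α) • y i) + (1 - α) • x ∈ s :=
    hs hu hx hα0.le (by linarith) (by ring)
  rwa [hrw] at h2

lemma exists_min {n : ℕ} (F : Set (EuclideanSpace ℝ (Fin n))) (hFcl : IsClosed F)
    (hFne : F.Nonempty) (ψ : EuclideanSpace ℝ (Fin n) → ℝ) (hψcont : Continuous ψ)
    (hψcoercive : ∀ A : ℝ, ∃ R : ℝ, ∀ ξ, R ≤ ‖ξ‖ → A ≤ ψ ξ) :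
    ∃ x ∈ F, ∀ z ∈ F, ψ x ≤ ψ z := by
  obtain ⟨p, hp⟩ := hFne
  obtain ⟨R, hR⟩ := hψcoercive (ψ p + 1)
  set K := F ∩ Metric.closedBall 0 (max R ‖p‖) with hKdef
  have hKc : IsCompact K := (isCompact_closedBall 0 _).inter_left hFcl
  have hpK : p ∈ K := ⟨hp, by
    rw [Metric.mem_closedBall, dist_zero_right]; exact le_max_right _ _⟩
  obtain ⟨x, hxK, hxmin⟩ := hKc.exists_isMinOn ⟨p, hpK⟩ hψcont.continuousOn
  have hxmin' := isMinOn_iff.mp hxmin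
  refine ⟨x, hxK.1, fun z hz => ?_⟩
  by_cases hzb : ‖z‖ ≤ max R ‖p‖
  · exact hxmin' z ⟨hz, by rw [Metric.mem_closedBall, dist_zero_right]; exact hzb⟩
  · have h1 : ψ p + 1 ≤ ψ z :=
      hR z (le_trans (le_max_left _ _) (le_of_lt (not_le.mp hzb)))
    have h2 := hxmin' p hpK
    linarith

lemma core_lemma {n : ℕ} (Ξ : Set (EuclideanSpace ℝ (Fin n))) (hΞconv : Convex ℝ Ξ)
    (ψ : EuclideanSpace ℝ (Fin n) → ℝ) (hψconv : ConvexOn ℝ Set.univ ψ)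
    (G : Fin (n + 1) → EuclideanSpace ℝ (Fin n) → ℝ)
    (hG : ∀ i, ConvexOn ℝ Set.univ (G i))
    (x' : EuclideanSpace ℝ (Fin n)) (hx'Ξ : x' ∈ Ξ) (hx'f : ∀ i, G i x' ≤ 0)
    (hmin : ∀ x ∈ Ξ, (∀ i, G i x ≤ 0) → ψ x' ≤ ψ x)
    (y : Fin (n + 1) → EuclideanSpace ℝ (Fin n)) (hyΞ : ∀ i, y i ∈ Ξ)
    (hyψ : ∀ i, ψ (y i) < ψ x') (hyg : ∀ i j, j ≠ i → G j (y i) < 0) : False := by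
  -- the n+1 difference vectors are linearly dependent
  have hdep : ¬ LinearIndependent ℝ (fun i => y i - x') := by
    intro h
    have hcard := h.fintype_card_le_finrank
    rw [finrank_euclideanSpace_fin, Fintype.card_fin] at hcard
    omega
  obtain ⟨c, hsum, i₁, hi₁⟩ :
      ∃ c : Fin (n + 1) → ℝ, (∑ i, c i • (y i - x') = 0) ∧ ∃ i, 0 < c i := by
    obtain ⟨c, hsum, i₁, hi₁⟩ := Fintype.not_linearIndependent_iff.mp hdep
    rcases (Ne.lt_or_gt hi₁) with h | h
    · refine ⟨-c, ?_, i₁, by simpa using h⟩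
      simpa [neg_smul] using congrArg Neg.neg hsum
    · exact ⟨c, hsum, i₁, h⟩
  set S : ℝ := ∑ i, |c i| with hSdef
  have hS : 0 < S :=
    Finset.sum_pos' (fun i _ => abs_nonneg _) ⟨i₁, Finset.mem_univ _, abs_pos.mpr hi₁.ne'⟩
  set a : Fin (n + 1) → ℝ := fun i => max (c i) 0 / S with hadef
  set b : Fin (n + 1) → ℝ := fun i => max (-c i) 0 / S with hbdef
  have ha0 : ∀ i, 0 ≤ a i := fun i => div_nonneg (le_max_right _ _) hS.le
  have hb0 : ∀ i, 0 ≤ b i := fun i => div_nonneg (le_max_right _ _) hS.le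
  have haz : ∀ i, c i ≤ 0 → a i = 0 := by
    intro i hci
    rw [hadef]
    simp [max_eq_right hci]
  have hbz : ∀ i, 0 ≤ c i → b i = 0 := by
    intro i hci
    rw [hbdef]
    simp [max_eq_right (neg_nonpos.mpr hci)]
  have hap : ∀ i, a i ≠ 0 → 0 < c i := by
    intro i hai
    by_contra hc
    exact hai (haz i (not_lt.mp hc))
  have hbp : ∀ i, b i ≠ 0 → c i < 0 := by
    intro i hbi
    by_contra hc
    exact hbi (hbz i (not_lt.mp hc))
  have hab : ∀ i, a i - b i = c i / S := by
    intro i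
    rw [hadef, hbdef]
    dsimp only
    rw [div_sub_div_same, max_zero_sub_max_neg_zero_eq_self]
  have habs : ∀ i, a i + b i = |c i| / S := by
    intro i
    rw [hadef, hbdef]
    dsimp only
    rw [← add_div, max_zero_add_max_neg_zero_eq_abs_self]
  set α : ℝ := ∑ i, a i with hαdef
  set β : ℝ := ∑ i, b i with hβdef
  have hαβ : α + β = 1 := by
    rw [hαdef, hβdef, ← Finset.sum_add_distrib]
    rw [Finset.sum_congr rfl fun i _ => habs i, ← Finset.sum_div, ← hSdef, div_self hS.ne']
  have hai₁ : 0 < a i₁ := by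
    rw [hadef]
    exact div_pos (lt_max_iff.mpr (Or.inl hi₁)) hS
  have hα0 : 0 < α := by
    have h1 : a i₁ ≤ α :=
      Finset.single_le_sum (fun i _ => ha0 i) (Finset.mem_univ i₁)
    linarith
  have hβ0 : 0 ≤ β := Finset.sum_nonneg fun i _ => hb0 i
  have hα1 : α ≤ 1 := by linarith
  have hβ1 : β ≤ 1 := by nlinarith
  -- the point z and its two representations
  set z : EuclideanSpace ℝ (Fin n) := ∑ i, a i • y i + (1 - α) • x' with hzdef
  have h1 : ∑ i, c i • y i = (∑ i, c i) • x' := by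
    have h := hsum
    rw [Finset.sum_congr rfl fun i (_ : i ∈ Finset.univ) => smul_sub (c i) (y i) x',
      Finset.sum_sub_distrib, sub_eq_zero] at h
    rw [h, Finset.sum_smul]
  have h2 : ∑ i, (a i - b i) • y i = (α - β) • x' := by
    have e1 : ∑ i, (a i - b i) • y i = S⁻¹ • ∑ i, c i • y i := by
      rw [Finset.smul_sum]
      refine Finset.sum_congr rfl fun i _ => ?_
      rw [hab i, smul_smul, div_eq_inv_mul]
    have e2 : α - β = S⁻¹ * ∑ i, c i := by
      rw [hαdef, hβdef, ← Finset.sum_sub_distrib, Finset.mul_sum]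
      exact Finset.sum_congr rfl fun i _ => by rw [hab i, div_eq_inv_mul]
    rw [e1, h1, e2, smul_smul]
  have hz2 : z = ∑ i, b i • y i + (1 - β) • x' := by
    have e : ∑ i, a i • y i - ∑ i, b i • y i = ∑ i, (a i - b i) • y i := by
      rw [← Finset.sum_sub_distrib]
      exact Finset.sum_congr rfl fun i _ => (sub_smul _ _ _).symm
    have e3 : ∑ i, a i • y i = (α - β) • x' + ∑ i, b i • y i :=
      sub_eq_iff_eq_add.mp (e.trans h2)
    rw [hzdef, e3]
    rw [show (1:ℝ) - β = (α - β) + (1 - α) by ring, add_smul]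
    abel
  -- z belongs to Ξ
  have hzΞ : z ∈ Ξ := combo_mem hΞconv ha0 hα0 hα1 hyΞ hx'Ξ
  -- ψ z < ψ x'
  have hψz : ψ z < ψ x' := by
    have hle := combo_le hψconv ha0 hα0 hα1 y x'
    have hlt : ∑ i, a i * ψ (y i) < ∑ i, a i * ψ x' := by
      refine Finset.sum_lt_sum (fun i _ => mul_le_mul_of_nonneg_left (hyψ i).le (ha0 i))
        ⟨i₁, Finset.mem_univ _, mul_lt_mul_of_pos_left (hyψ i₁) hai₁⟩
    have hsummul : ∑ i, a i * ψ x' = α * ψ x' := by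
      rw [← Finset.sum_mul]
    nlinarith [hle, hlt, hsummul]
  -- z is feasible
  have hzfeas : ∀ j, G j z ≤ 0 := by
    intro j
    by_cases hcj : 0 < c j
    · -- use the b-representation
      by_cases hβpos : 0 < β
      · have hle : G j z ≤ ∑ i, b i * G j (y i) + (1 - β) * G j x' := by
          rw [hz2]
          exact combo_le (hG j) hb0 hβpos hβ1 y x'
        have hterms : ∑ i, b i * G j (y i) ≤ 0 := by
          refine Finset.sum_nonpos fun i _ => ?_
          rcases eq_or_ne (b i) 0 with h | h
          · rw [h, zero_mul]
          · have hci : c i < 0 := hbp i h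
            have hij : j ≠ i := fun hji => absurd (hji ▸ hcj) (not_lt.mpr hci.le)
            exact mul_nonpos_of_nonneg_of_nonpos (hb0 i) (hyg i j hij).le
        have hlast : (1 - β) * G j x' ≤ 0 :=
          mul_nonpos_of_nonneg_of_nonpos (by linarith) (hx'f j)
        linarith
      · -- β = 0 : z = x'
        have hβz : β = 0 := le_antisymm (not_lt.mp hβpos) hβ0
        have hbzero : ∀ i, b i = 0 := by
          intro i
          have := (Finset.sum_eq_zero_iff_of_nonneg fun i _ => hb0 i).mp (hβdef ▸ hβz)
          exact this i (Finset.mem_univ i)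
        have hzx : z = x' := by
          rw [hz2, hβz]
          simp [hbzero]
        rw [hzx]
        exact hx'f j
    · -- use the a-representation
      have hle : G j z ≤ ∑ i, a i * G j (y i) + (1 - α) * G j x' := by
        rw [hzdef]
        exact combo_le (hG j) ha0 hα0 hα1 y x'
      have hterms : ∑ i, a i * G j (y i) ≤ 0 := by
        refine Finset.sum_nonpos fun i _ => ?_
        rcases eq_or_ne (a i) 0 with h | h
        · rw [h, zero_mul]
        · have hci : 0 < c i := hap i h
          have hij : j ≠ i := fun hji => hcj (hji ▸ hci)
          exact mul_nonpos_of_nonneg_of_nonpos (ha0 i) (hyg i j hij).le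
      have hlast : (1 - α) * G j x' ≤ 0 :=
        mul_nonpos_of_nonneg_of_nonpos (by linarith) (hx'f j)
      linarith
  exact absurd (hmin z hzΞ hzfeas) (not_le.mpr hψz)

theorem stmt_11
    (ν μ : ℕ) (hν : 1 ≤ ν) (hμ : 1 ≤ μ)
    (Ξ : Set (EuclideanSpace ℝ (Fin ν)))
    (hΞne : Ξ.Nonempty) (hΞcl : IsClosed Ξ) (hΞconv : Convex ℝ Ξ)
    (Θ : Set (EuclideanSpace ℝ (Fin μ)))
    (hΘne : Θ.Nonempty) (hΘcpt : IsCompact Θ)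
    (ψ : EuclideanSpace ℝ (Fin ν) → ℝ)
    (hψcont : Continuous ψ) (hψnonneg : ∀ ξ, 0 ≤ ψ ξ) (hψconv : ConvexOn ℝ Set.univ ψ)
    (g : EuclideanSpace ℝ (Fin ν) → EuclideanSpace ℝ (Fin μ) → ℝ)
    (hgcont : Continuous fun p : EuclideanSpace ℝ (Fin ν) × EuclideanSpace ℝ (Fin μ) =>
      g p.1 p.2)
    (hgconv : ∀ θ ∈ Θ, ConvexOn ℝ Set.univ fun ξ => g ξ θ)
    -- Slater's condition
    (hSlater : ∃ ξhat ∈ Ξ, ∀ θ ∈ Θ, g ξhat θ < 0)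
    -- ψ is in addition strictly convex and coercive
    (hψstrict : StrictConvexOn ℝ Set.univ ψ)
    (hψcoercive : ∀ A : ℝ, ∃ R : ℝ, ∀ ξ, R ≤ ‖ξ‖ → A ≤ ψ ξ)
    -- (θ₁*, …, θ_ν*) attains the supremum of the relaxed value map over Θ^ν
    (θstar : Fin ν → EuclideanSpace ℝ (Fin μ)) (hθstarΘ : ∀ k, θstar k ∈ Θ)
    (hθstarmax : ∀ θs : Fin ν → EuclideanSpace ℝ (Fin μ), (∀ k, θs k ∈ Θ) →
      sInf (ψ '' {ξ ∈ Ξ | ∀ k : Fin ν, g ξ (θs k) ≤ 0}) ≤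
        sInf (ψ '' {ξ ∈ Ξ | ∀ k : Fin ν, g ξ (θstar k) ≤ 0}))
    -- ξ* minimizes ψ over the relaxed feasible set
    (ξstar : EuclideanSpace ℝ (Fin ν))
    (hξstarΞ : ξstar ∈ Ξ) (hξstarFeas : ∀ k : Fin ν, g ξstar (θstar k) ≤ 0)
    (hξstarMin : ∀ ξ ∈ Ξ, (∀ k : Fin ν, g ξ (θstar k) ≤ 0) → ψ ξstar ≤ ψ ξ) :
    -- ξ* is feasible for the full semi-infinite program and minimizes ψ over its feasible set
    (∀ θ ∈ Θ, g ξstar θ ≤ 0) ∧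
    (∀ ξ ∈ Ξ, (∀ θ ∈ Θ, g ξ θ ≤ 0) → ψ ξstar ≤ ψ ξ) := by
  obtain ⟨ξhat, hξhatΞ, hξhatSl⟩ := hSlater
  have feas : ∀ θ ∈ Θ, g ξstar θ ≤ 0 := by
    by_contra hcon
    push_neg at hcon
    obtain ⟨θbar, hθbarΘ, hgpos⟩ := hcon
    obtain ⟨n, rfl⟩ : ∃ n, ν = n + 1 := ⟨ν - 1, by omega⟩
    -- extended family of constraint points
    set θ' : Fin (n + 1 + 1) → EuclideanSpace ℝ (Fin μ) := Fin.snoc θstar θbar with hθ'def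
    have hθ'Θ : ∀ i, θ' i ∈ Θ := by
      intro i
      induction i using Fin.lastCases with
      | last => rw [hθ'def, Fin.snoc_last]; exact hθbarΘ
      | cast k => rw [hθ'def, Fin.snoc_castSucc]; exact hθstarΘ k
    -- continuity of the constraint functions
    have hgcont1 : ∀ θ : EuclideanSpace ℝ (Fin μ), Continuous fun ξ => g ξ θ := by
      intro θ
      have hpair : Continuous fun ξ : EuclideanSpace ℝ (Fin (n + 1)) => (ξ, θ) :=
        continuous_id.prodMk continuous_const
      exact hgcont.comp hpair
    -- extended feasible set
    set F : Set (EuclideanSpace ℝ (Fin (n + 1))) :=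
      Ξ ∩ ⋂ i, {ξ | g ξ (θ' i) ≤ 0} with hFdef
    have hFmem : ∀ ξ, ξ ∈ F ↔ ξ ∈ Ξ ∧ ∀ i, g ξ (θ' i) ≤ 0 := by
      intro ξ
      simp [hFdef, Set.mem_iInter]
    have hFcl : IsClosed F := by
      rw [hFdef]
      exact hΞcl.inter (isClosed_iInter fun i =>
        isClosed_le (hgcont1 (θ' i)) continuous_const)
    have hξhatF : ξhat ∈ F :=
      (hFmem ξhat).mpr ⟨hξhatΞ, fun i => (hξhatSl (θ' i) (hθ'Θ i)).le⟩
    obtain ⟨x', hx'F, hx'min⟩ := exists_min F hFcl ⟨ξhat, hξhatF⟩ ψ hψcont hψcoercive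
    obtain ⟨hx'Ξ, hx'feas⟩ := (hFmem x').mp hx'F
    set v : ℝ := ψ ξstar with hvdef
    set v' : ℝ := ψ x' with hv'def
    -- x' is feasible for the θ* problem
    have hx'rel : ∀ k : Fin (n + 1), g x' (θstar k) ≤ 0 := by
      intro k
      have := hx'feas (Fin.castSucc k)
      rwa [hθ'def, Fin.snoc_castSucc] at this
    have hvv' : v < v' := by
      have hle : v ≤ v' := hξstarMin x' hx'Ξ hx'rel
      rcases lt_or_eq_of_le hle with h | h
      · exact h
      · exfalso
        -- v = v' : midpoint argument using strict convexity
        have hne : x' ≠ ξstar := by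
          intro he
          have hlast := hx'feas (Fin.last (n + 1))
          rw [hθ'def, Fin.snoc_last, he] at hlast
          exact absurd hlast (not_le.mpr hgpos)
        set m : EuclideanSpace ℝ (Fin (n + 1)) :=
          (1 / 2 : ℝ) • x' + (1 / 2 : ℝ) • ξstar with hmdef
        have hmΞ : m ∈ Ξ :=
          hΞconv hx'Ξ hξstarΞ (by norm_num : (0:ℝ) ≤ 1/2) (by norm_num : (0:ℝ) ≤ 1/2)
            (by norm_num)
        have hmfeas : ∀ k : Fin (n + 1), g m (θstar k) ≤ 0 := by
          intro k
          have hc : g ((1/2 : ℝ) • x' + (1/2 : ℝ) • ξstar) (θstar k)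
              ≤ 1/2 * g x' (θstar k) + 1/2 * g ξstar (θstar k) :=
            (hgconv (θstar k) (hθstarΘ k)).2 (Set.mem_univ x') (Set.mem_univ ξstar)
              (by norm_num : (0:ℝ) ≤ 1/2) (by norm_num : (0:ℝ) ≤ 1/2) (by norm_num)
          have h1 := hx'rel k
          have h2 := hξstarFeas k
          rw [hmdef]
          linarith
        have hmlt : ψ m < v := by
          have hsc : ψ ((1/2 : ℝ) • x' + (1/2 : ℝ) • ξstar)
              < 1/2 * ψ x' + 1/2 * ψ ξstar :=
            hψstrict.2 (Set.mem_univ x') (Set.mem_univ ξstar) hne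
              (by norm_num : (0:ℝ) < 1/2) (by norm_num : (0:ℝ) < 1/2) (by norm_num)
          rw [hmdef]
          rw [← hv'def, ← hvdef, ← h] at hsc
          linarith
        exact absurd (hξstarMin m hmΞ hmfeas) (not_le.mpr hmlt)
    -- key step: some constraint can be dropped while keeping the value at least v'
    have hkey : ∃ i₀ : Fin (n + 1 + 1), ∀ w ∈ Ξ,
        (∀ j, j ≠ i₀ → g w (θ' j) ≤ 0) → v' ≤ ψ w := by
      by_contra hno
      push_neg at hno
      choose w hwΞ hwfeas hwψ using hno
      have hy : ∀ i : Fin (n + 1 + 1), ∃ z ∈ Ξ, ψ z < v' ∧ ∀ j, j ≠ i → g z (θ' j) < 0 := by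
        intro i
        by_cases hhat : ψ ξhat < v'
        · exact ⟨ξhat, hξhatΞ, hhat, fun j _ => hξhatSl (θ' j) (hθ'Θ j)⟩
        · push_neg at hhat
          set M : ℝ := ψ ξhat with hMdef
          have hM : ψ (w i) < M := lt_of_lt_of_le (hwψ i) hhat
          set ε : ℝ := v' - ψ (w i) with hεdef
          have hε : 0 < ε := by rw [hεdef]; linarith [hwψ i]
          have hMw : 0 < M - ψ (w i) := by linarith
          set t : ℝ := ε / (2 * (M - ψ (w i))) with htdef
          have ht0 : 0 < t := div_pos hε (by linarith)
          have ht1 : t ≤ 1 := by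
            rw [htdef, div_le_one (by linarith)]
            rw [hεdef]
            linarith
          have htM : t * (M - ψ (w i)) < ε := by
            rw [htdef, div_mul_eq_mul_div, div_lt_iff₀ (by linarith : 0 < 2 * (M - ψ (w i)))]
            nlinarith
          refine ⟨(1 - t) • w i + t • ξhat,
            hΞconv (hwΞ i) hξhatΞ (by linarith : (0:ℝ) ≤ 1 - t) ht0.le (by ring), ?_, ?_⟩
          · have hc : ψ ((1 - t) • w i + t • ξhat) ≤ (1 - t) * ψ (w i) + t * ψ ξhat :=
              hψconv.2 (Set.mem_univ (w i)) (Set.mem_univ ξhat)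
                (by linarith : (0:ℝ) ≤ 1 - t) ht0.le (by ring)
            rw [← hMdef] at hc
            have : (1 - t) * ψ (w i) + t * M = ψ (w i) + t * (M - ψ (w i)) := by ring
            rw [hεdef] at htM hε
            linarith
          · intro j hj
            have hc : g ((1 - t) • w i + t • ξhat) (θ' j)
                ≤ (1 - t) * g (w i) (θ' j) + t * g ξhat (θ' j) :=
              (hgconv (θ' j) (hθ'Θ j)).2 (Set.mem_univ (w i)) (Set.mem_univ ξhat)
                (by linarith : (0:ℝ) ≤ 1 - t) ht0.le (by ring)
            have h1 := hwfeas i j hj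
            have h2 := hξhatSl (θ' j) (hθ'Θ j)
            have hA : (1 - t) * g (w i) (θ' j) ≤ 0 :=
              mul_nonpos_of_nonneg_of_nonpos (by linarith) h1
            have hB : t * g ξhat (θ' j) < 0 := mul_neg_of_pos_of_neg ht0 h2
            linarith
      choose y hyΞ hyψ hyg using hy
      exact core_lemma Ξ hΞconv ψ hψconv (fun i ξ => g ξ (θ' i))
        (fun i => hgconv (θ' i) (hθ'Θ i)) x' hx'Ξ hx'feas
        (fun x hx hfx => hx'min x ((hFmem x).mpr ⟨hx, hfx⟩)) y hyΞ hyψ hyg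
    obtain ⟨i₀, hi₀⟩ := hkey
    set θs : Fin (n + 1) → EuclideanSpace ℝ (Fin μ) := fun k => θ' (i₀.succAbove k)
      with hθsdef
    have hθsΘ : ∀ k, θs k ∈ Θ := fun k => hθ'Θ _
    have hmax := hθstarmax θs hθsΘ
    have hRHS : sInf (ψ '' {ξ ∈ Ξ | ∀ k : Fin (n + 1), g ξ (θstar k) ≤ 0}) = v := by
      refine IsLeast.csInf_eq ⟨⟨ξstar, ⟨hξstarΞ, hξstarFeas⟩, rfl⟩, ?_⟩
      rintro r ⟨x, ⟨hxΞ, hxf⟩, rfl⟩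
      exact hξstarMin x hxΞ hxf
    have hLHS : v' ≤ sInf (ψ '' {ξ ∈ Ξ | ∀ k : Fin (n + 1), g ξ (θs k) ≤ 0}) := by
      refine le_csInf ⟨ψ x', ⟨x', ⟨hx'Ξ, fun k => hx'feas (i₀.succAbove k)⟩, rfl⟩⟩ ?_
      rintro r ⟨x, ⟨hxΞ, hxf⟩, rfl⟩
      refine hi₀ x hxΞ ?_
      intro j hj
      obtain ⟨k, hk⟩ := Fin.exists_succAbove_eq hj
      rw [← hk]
      exact hxf k
    rw [hRHS] at hmax
    linarith
  refine ⟨feas, fun ξ hξΞ hξfeas => ?_⟩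
  exact hξstarMin ξ hξΞ fun k => hξfeas (θstar k) (hθstarΘ k)
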